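/- Let f be a permutation of F_2^n and let V_f = {0} ∪ { a ∈ F_2^n \ {0} : f(H(a, 0)) is an (n−1)-flat }, where H(a, 0) = { x ∈ F_2^n : ⟨a, x⟩ = 0 }. Then V_f is an F_2-subspace of F_2^n. -/
import Mathlib


/-- A `k`-flat in an `F`-vector space `V`: a coset of a `k`-dimensional `F`-subspace. -/
def IsFlat (F : Type*) {V : Type*} [Field F] [AddCommGroup V] [Module F V]
    (k : ℕ) (X : Set V) : Prop :=
  ∃ (U : Submodule F V) (x : V), Module.finrank F U = k ∧ X = (fun u => u + x) '' (U : Set V)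

namespace VfAux

open Module

/-- The linear functional `x ↦ ∑ i, a i * x i`. -/
def dotL (n : ℕ) (a : Fin n → ZMod 2) : (Fin n → ZMod 2) →ₗ[ZMod 2] ZMod 2 where
  toFun x := ∑ i, a i * x i
  map_add' x y := by simp [mul_add, Finset.sum_add_distrib]
  map_smul' r x := by
    simp only [Pi.smul_apply, smul_eq_mul, RingHom.id_apply, Finset.mul_sum]
    exact Finset.sum_congr rfl fun i _ => by ring

lemma dotL_apply (n : ℕ) (a x : Fin n → ZMod 2) : dotL n a x = ∑ i, a i * x i := rfl

lemma dotL_single (n : ℕ) (a : Fin n → ZMod 2) (i : Fin n) :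
    dotL n a (Pi.single i 1) = a i := by
  simp [dotL_apply, Pi.single_apply]

lemma dotL_add_left (n : ℕ) (a b x : Fin n → ZMod 2) :
    dotL n (a + b) x = dotL n a x + dotL n b x := by
  simp [dotL_apply, add_mul, Finset.sum_add_distrib]

lemma sum_single {n : ℕ} (x : Fin n → ZMod 2) :
    ∑ i, x i • Pi.single i (1 : ZMod 2) = x := by
  funext j
  simp [Finset.sum_apply, Pi.single_apply]

lemma z1 : ∀ u v e : ZMod 2, (u = 0 ↔ v = e) → u = v + e := by decide
lemma z2 : ∀ u v e : ZMod 2, u = v + e → (u = 0 ↔ v = e) := by decide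
lemma z3 : ∀ u : ZMod 2, u ≠ 0 → u = 1 := by decide

lemma flat_to_hyp {n : ℕ} (hn : 0 < n) {X : Set (Fin n → ZMod 2)}
    (h : IsFlat (ZMod 2) (n - 1) X) :
    ∃ c : Fin n → ZMod 2, c ≠ 0 ∧ ∃ ε, X = {y | dotL n c y = ε} := by
  obtain ⟨U, x, hU, hX⟩ := h
  have hfin : finrank (ZMod 2) (Fin n → ZMod 2) = n := by
    simp [Module.finrank_pi]
  have hq : finrank (ZMod 2) ((Fin n → ZMod 2) ⧸ U) = 1 := by
    have h2 := Submodule.finrank_quotient_add_finrank U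
    rw [hfin, hU] at h2
    omega
  obtain ⟨e⟩ : Nonempty (((Fin n → ZMod 2) ⧸ U) ≃ₗ[ZMod 2] ZMod 2) :=
    FiniteDimensional.nonempty_linearEquiv_of_finrank_eq (by simp [hq])
  set φ : (Fin n → ZMod 2) →ₗ[ZMod 2] ZMod 2 := e.toLinearMap ∘ₗ U.mkQ with hφ
  have hker : LinearMap.ker φ = U := by
    rw [hφ, LinearMap.ker_comp, LinearEquiv.ker]
    exact U.ker_mkQ
  set c : Fin n → ZMod 2 := fun i => φ (Pi.single i 1) with hc'
  have hφc : ∀ z, φ z = dotL n c z := by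
    intro z
    conv_lhs => rw [← sum_single z]
    rw [map_sum]
    simp only [map_smul, smul_eq_mul, dotL_apply]
    exact Finset.sum_congr rfl fun i _ => mul_comm _ _
  have hc : c ≠ 0 := by
    intro h0
    have hz : ∀ z, φ z = 0 := by
      intro z; rw [hφc, h0]; simp [dotL_apply]
    have hUe : U = ⊤ := by
      rw [← hker]; ext z; simp [LinearMap.mem_ker, hz z]
    rw [hUe] at hU
    rw [finrank_top, hfin] at hU
    omega
  refine ⟨c, hc, dotL n c x, ?_⟩
  rw [hX]
  ext y
  simp only [Set.mem_image, SetLike.mem_coe, Set.mem_setOf_eq]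
  constructor
  · rintro ⟨u, hu, rfl⟩
    have : dotL n c u = 0 := by
      rw [← hφc]
      exact (LinearMap.mem_ker).mp (hker ▸ hu)
    rw [map_add, this, zero_add]
  · intro hy
    refine ⟨y - x, ?_, by abel⟩
    rw [← hker, LinearMap.mem_ker, hφc, map_sub, hy, sub_self]

lemma hyp_to_flat {n : ℕ} {c : Fin n → ZMod 2} (hc : c ≠ 0) (ε : ZMod 2) :
    IsFlat (ZMod 2) (n - 1) {y | dotL n c y = ε} := by
  obtain ⟨i, hi⟩ := Function.ne_iff.mp hc
  simp only [Pi.zero_apply] at hi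
  have hci : c i = 1 := z3 _ hi
  have hfin : finrank (ZMod 2) (Fin n → ZMod 2) = n := by
    simp [Module.finrank_pi]
  have hrange : LinearMap.range (dotL n c) = ⊤ := by
    rw [LinearMap.range_eq_top]
    intro t
    exact ⟨t • Pi.single i 1, by rw [map_smul, dotL_single, hci, smul_eq_mul, mul_one]⟩
  have hker : finrank (ZMod 2) (LinearMap.ker (dotL n c)) = n - 1 := by
    have h2 := LinearMap.finrank_range_add_finrank_ker (dotL n c)
    rw [hrange, finrank_top, hfin] at h2
    simp only [Module.finrank_self] at h2
    omega
  set x0 : Fin n → ZMod 2 := ε • Pi.single i 1 with hx0def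
  have hx0 : dotL n c x0 = ε := by
    rw [hx0def, map_smul, dotL_single, hci, smul_eq_mul, mul_one]
  refine ⟨LinearMap.ker (dotL n c), x0, hker, ?_⟩
  ext y
  simp only [Set.mem_image, SetLike.mem_coe, Set.mem_setOf_eq, LinearMap.mem_ker]
  constructor
  · intro hy
    refine ⟨y - x0, ?_, by abel⟩
    rw [map_sub, hy, hx0, sub_self]
  · rintro ⟨u, hu, rfl⟩
    rw [map_add, hu, zero_add, hx0]

lemma mem_iff {n : ℕ} (f : Equiv.Perm (Fin n → ZMod 2)) (a : Fin n → ZMod 2) (ha : a ≠ 0) :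
    IsFlat (ZMod 2) (n - 1) (⇑f '' {x : Fin n → ZMod 2 | ∑ i, a i * x i = 0}) ↔
      ∃ c : Fin n → ZMod 2, c ≠ 0 ∧ ∃ ε, ∀ y, dotL n a (f.symm y) = dotL n c y + ε := by
  have hn : 0 < n := by
    rcases Nat.eq_zero_or_pos n with h | h
    · subst h
      exact absurd (Subsingleton.elim a 0) ha
    · exact h
  have himg : ⇑f '' {x : Fin n → ZMod 2 | ∑ i, a i * x i = 0}
      = {y | dotL n a (f.symm y) = 0} := by
    ext y
    rw [Equiv.image_eq_preimage_symm]
    simp [dotL_apply]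
  rw [himg]
  constructor
  · intro h
    obtain ⟨c, hc, ε, hXε⟩ := flat_to_hyp hn h
    refine ⟨c, hc, ε, fun y => ?_⟩
    have hy := Set.ext_iff.mp hXε y
    simp only [Set.mem_setOf_eq] at hy
    exact z1 _ _ _ hy
  · rintro ⟨c, hc, ε, h⟩
    have hset : {y | dotL n a (f.symm y) = 0} = {y | dotL n c y = ε} := by
      ext y
      simp only [Set.mem_setOf_eq]
      exact z2 _ _ _ (h y)
    rw [hset]
    exact hyp_to_flat hc ε

lemma closure {n : ℕ} (f : Equiv.Perm (Fin n → ZMod 2)) {a b : Fin n → ZMod 2}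
    (ha : a ≠ 0 ∧ IsFlat (ZMod 2) (n - 1) (⇑f '' {x : Fin n → ZMod 2 | ∑ i, a i * x i = 0}))
    (hb : b ≠ 0 ∧ IsFlat (ZMod 2) (n - 1) (⇑f '' {x : Fin n → ZMod 2 | ∑ i, b i * x i = 0}))
    (hab : a + b ≠ 0) :
    (a + b ≠ 0 ∧ IsFlat (ZMod 2) (n - 1)
      (⇑f '' {x : Fin n → ZMod 2 | ∑ i, (a + b) i * x i = 0})) := by
  obtain ⟨c, hc, ε, h1⟩ := (mem_iff f a ha.1).mp ha.2
  obtain ⟨d, hd, δ, h2⟩ := (mem_iff f b hb.1).mp hb.2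
  have key : ∀ y, dotL n (a + b) (f.symm y) = dotL n (c + d) y + (ε + δ) := by
    intro y
    rw [dotL_add_left, dotL_add_left, h1, h2]
    abel
  have hcd : c + d ≠ 0 := by
    intro h0
    have hconst : ∀ y, dotL n (a + b) (f.symm y) = ε + δ := by
      intro y
      rw [key, h0]
      simp [dotL_apply]
    have h00 : (0 : ZMod 2) = ε + δ := by
      have := hconst (f 0)
      rwa [Equiv.symm_apply_apply, map_zero] at this
    obtain ⟨i, hi⟩ := Function.ne_iff.mp hab
    simp only [Pi.zero_apply] at hi
    have h11 : (1 : ZMod 2) = ε + δ := by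
      have := hconst (f (Pi.single i 1))
      rwa [Equiv.symm_apply_apply, dotL_single, z3 _ hi] at this
    rw [← h00] at h11
    exact one_ne_zero h11
  exact ⟨hab, (mem_iff f (a + b) hab).mpr ⟨c + d, hcd, ε + δ, key⟩⟩

end VfAux

/-- For a permutation `f` of `𝔽₂ⁿ`, the set
`V_f = {0} ∪ { a ≠ 0 : f(H(a,0)) is an (n−1)-flat }` is an `𝔽₂`-subspace of `𝔽₂ⁿ`,
where `H(a,0) = { x : ⟨a,x⟩ = 0 }`. -/
theorem Vf_is_subspace (n : ℕ) (f : Equiv.Perm (Fin n → ZMod 2)) :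
    ∃ U : Submodule (ZMod 2) (Fin n → ZMod 2),
      (U : Set (Fin n → ZMod 2)) =
        insert (0 : Fin n → ZMod 2)
          {a : Fin n → ZMod 2 | a ≠ 0 ∧
            IsFlat (ZMod 2) (n - 1) (⇑f '' {x : Fin n → ZMod 2 | ∑ i, a i * x i = 0})} := by
  refine ⟨{
    carrier := insert (0 : Fin n → ZMod 2)
      {a : Fin n → ZMod 2 | a ≠ 0 ∧
        IsFlat (ZMod 2) (n - 1) (⇑f '' {x : Fin n → ZMod 2 | ∑ i, a i * x i = 0})}
    zero_mem' := Set.mem_insert _ _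
    add_mem' := ?_
    smul_mem' := ?_ }, rfl⟩
  · intro a b ha hb
    rcases Set.mem_insert_iff.mp ha with ha | ha
    · rw [ha, zero_add]; exact hb
    rcases Set.mem_insert_iff.mp hb with hb | hb
    · rw [hb, add_zero]; exact Set.mem_insert_iff.mpr (Or.inr ha)
    by_cases hab : a + b = 0
    · exact Set.mem_insert_iff.mpr (Or.inl hab)
    · exact Set.mem_insert_iff.mpr (Or.inr (VfAux.closure f ha hb hab))
  · intro r a ha
    rcases (by decide : ∀ u : ZMod 2, u = 0 ∨ u = 1) r with h | h
    · subst h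
      simp only [zero_smul]
      exact Set.mem_insert (0 : Fin n → ZMod 2) _
    · subst h
      simpa using ha
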